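/- For every positive semidefinite d×d matrix ρ with tr(ρ) = 1: if h(ρ) = 0, then there exist a positive semidefinite d×d matrix σ with tr(σ) = 1 and supp(σ) ⊆ H_R(ρ), and a schedule s, such that t_s(σ) = 0. -/

import Mathlib

noncomputable section
open Matrix
open scoped ComplexOrder

variable {d m r : ℕ}

/-- One step of process `i`: `T_i(ρ) = E_i(M₁ ρ M₁†) = ∑_j (E_{i,j} M₁) ρ (E_{i,j} M₁)†`. -/
def Tstep (E : Fin m → Fin r → Matrix (Fin d) (Fin d) ℂ)
    (M1 : Matrix (Fin d) (Fin d) ℂ) (i : Fin m)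
    (ρ : Matrix (Fin d) (Fin d) ℂ) : Matrix (Fin d) (Fin d) ℂ :=
  ∑ j, (E i j * M1) * ρ * (E i j * M1)ᴴ

/-- `T_f` for a word `f = s₁⋯s_n`: apply `T_{s₁}` first, then `T_{s₂}`, …, `T_{s_n}`. -/
def Tword (E : Fin m → Fin r → Matrix (Fin d) (Fin d) ℂ)
    (M1 : Matrix (Fin d) (Fin d) ℂ) (f : List (Fin m))
    (ρ : Matrix (Fin d) (Fin d) ℂ) : Matrix (Fin d) (Fin d) ℂ :=
  f.foldl (fun σ k => Tstep E M1 k σ) ρ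

/-- The support of a matrix: its column space, as a subspace of `ℂ^d`. -/
def supp (A : Matrix (Fin d) (Fin d) ℂ) : Submodule ℂ (Fin d → ℂ) :=
  LinearMap.range (Matrix.toLin' A)

/-- Length-`n` prefix of a schedule. -/
def prefixn (s : ℕ → Fin m) (n : ℕ) : List (Fin m) :=
  List.ofFn (fun i : Fin n => s i)

/-- Termination probability within a word `f`. -/
def tWord (E : Fin m → Fin r → Matrix (Fin d) (Fin d) ℂ)
    (M0 M1 : Matrix (Fin d) (Fin d) ℂ) (f : List (Fin m))
    (ρ : Matrix (Fin d) (Fin d) ℂ) : ℝ :=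
  ∑ n ∈ Finset.range (f.length + 1),
    (M0 * Tword E M1 (f.take n) ρ * M0ᴴ).trace.re

/-- Termination probability along a schedule `s`. -/
def tSched (E : Fin m → Fin r → Matrix (Fin d) (Fin d) ℂ)
    (M0 M1 : Matrix (Fin d) (Fin d) ℂ) (s : ℕ → Fin m)
    (ρ : Matrix (Fin d) (Fin d) ℂ) : ℝ :=
  ∑' n : ℕ, (M0 * Tword E M1 (prefixn s n) ρ * M0ᴴ).trace.re

/-- Termination probability `t(ρ)`: infimum over all schedules. -/
def tInf (E : Fin m → Fin r → Matrix (Fin d) (Fin d) ℂ)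
    (M0 M1 : Matrix (Fin d) (Fin d) ℂ)
    (ρ : Matrix (Fin d) (Fin d) ℂ) : ℝ :=
  ⨅ s : ℕ → Fin m, tSched E M0 M1 s ρ

/-- The reachable space `H_{R(ρ)}`. -/
def HR (E : Fin m → Fin r → Matrix (Fin d) (Fin d) ℂ)
    (M1 : Matrix (Fin d) (Fin d) ℂ)
    (ρ : Matrix (Fin d) (Fin d) ℂ) : Submodule ℂ (Fin d → ℂ) :=
  ⨆ f : List (Fin m), supp (Tword E M1 f ρ)

/-- The average super-operator `T = (1/m) ∑ T_i`. -/
def Tavg (E : Fin m → Fin r → Matrix (Fin d) (Fin d) ℂ)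
    (M1 : Matrix (Fin d) (Fin d) ℂ)
    (ρ : Matrix (Fin d) (Fin d) ℂ) : Matrix (Fin d) (Fin d) ℂ :=
  ((m : ℂ)⁻¹) • ∑ i : Fin m, Tstep E M1 i ρ

/-- `H_{R̄_n(ρ)} = ⋁_{k=0}^n supp(T^k(ρ))`. -/
def HRbar (E : Fin m → Fin r → Matrix (Fin d) (Fin d) ℂ)
    (M1 : Matrix (Fin d) (Fin d) ℂ)
    (ρ : Matrix (Fin d) (Fin d) ℂ) (n : ℕ) : Submodule ℂ (Fin d → ℂ) :=
  ⨆ k : Fin (n + 1), supp ((Tavg E M1)^[k] ρ)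

/-- Reachable termination probability `h(ρ)`. -/
def hProb (E : Fin m → Fin r → Matrix (Fin d) (Fin d) ℂ)
    (M0 M1 : Matrix (Fin d) (Fin d) ℂ)
    (ρ : Matrix (Fin d) (Fin d) ℂ) : ℝ :=
  sInf { x : ℝ | ∃ σ : Matrix (Fin d) (Fin d) ℂ,
    σ.PosSemidef ∧ σ.trace = 1 ∧ supp σ ≤ HR E M1 ρ ∧ x = tInf E M0 M1 σ }

/-- `PD_f`: pure states diverging within the word `f`. -/
def PDword (E : Fin m → Fin r → Matrix (Fin d) (Fin d) ℂ)
    (M0 M1 : Matrix (Fin d) (Fin d) ℂ) (f : List (Fin m)) : Set (Fin d → ℂ) :=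
  { x : Fin d → ℂ | tWord E M0 M1 f (Matrix.vecMulVec x (star x)) = 0 }

/-- `PD_n`: union of `PD_f` over words of length `n`. -/
def PDn (E : Fin m → Fin r → Matrix (Fin d) (Fin d) ℂ)
    (M0 M1 : Matrix (Fin d) (Fin d) ℂ) (n : ℕ) : Set (Fin d → ℂ) :=
  { x : Fin d → ℂ | ∃ f : List (Fin m), f.length = n ∧ x ∈ PDword E M0 M1 f }

/-- `PD`: the diverging pure states. -/
def PD (E : Fin m → Fin r → Matrix (Fin d) (Fin d) ℂ)
    (M0 M1 : Matrix (Fin d) (Fin d) ℂ) : Set (Fin d → ℂ) :=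
  { x : Fin d → ℂ | ∃ s : ℕ → Fin m, tSched E M0 M1 s (Matrix.vecMulVec x (star x)) = 0 }


section AuxLemmas

variable (E : Fin m → Fin r → Matrix (Fin d) (Fin d) ℂ) (M0 M1 : Matrix (Fin d) (Fin d) ℂ)

lemma my_Tword_append (f g : List (Fin m)) (ρ : Matrix (Fin d) (Fin d) ℂ) :
    Tword E M1 (f ++ g) ρ = Tword E M1 g (Tword E M1 f ρ) := by
  simp [Tword, List.foldl_append]

lemma my_prefixn_succ (s : ℕ → Fin m) (n : ℕ) :
    prefixn s (n + 1) = prefixn s n ++ [s n] := by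
  rw [prefixn, List.ofFn_succ', List.concat_eq_append]
  simp [prefixn]

lemma my_Tword_prefixn_succ (s : ℕ → Fin m) (σ : Matrix (Fin d) (Fin d) ℂ) (n : ℕ) :
    Tword E M1 (prefixn s (n+1)) σ = Tstep E M1 (s n) (Tword E M1 (prefixn s n) σ) := by
  rw [my_prefixn_succ, my_Tword_append]; rfl

lemma my_psd_Tstep (i : Fin m) {σ : Matrix (Fin d) (Fin d) ℂ} (h : σ.PosSemidef) :
    (Tstep E M1 i σ).PosSemidef :=
  Finset.sum_induction _ _ (fun _ _ ha hb => ha.add hb) Matrix.PosSemidef.zero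
    (fun _ _ => h.mul_mul_conjTranspose_same _)

lemma my_psd_Tword (f : List (Fin m)) : ∀ {σ : Matrix (Fin d) (Fin d) ℂ}, σ.PosSemidef →
    (Tword E M1 f σ).PosSemidef := by
  induction f with
  | nil => intro σ h; exact h
  | cons a t ih => intro σ h; exact ih (my_psd_Tstep E M1 a h)

lemma my_diag_nonneg {A : Matrix (Fin d) (Fin d) ℂ} (h : A.PosSemidef) (i : Fin d) :
    (0:ℂ) ≤ A i i := by
  have := h.dotProduct_mulVec_nonneg (Pi.single i 1)
  simpa [dotProduct, Matrix.mulVec, Pi.single_apply, Finset.mul_sum,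
    Finset.sum_ite_eq, Finset.sum_ite_eq'] using this

lemma my_trace_nonneg {A : Matrix (Fin d) (Fin d) ℂ} (h : A.PosSemidef) :
    (0:ℂ) ≤ A.trace := by
  rw [Matrix.trace]; exact Finset.sum_nonneg fun i _ => my_diag_nonneg h i

lemma my_trace_re_nonneg {A : Matrix (Fin d) (Fin d) ℂ} (h : A.PosSemidef) :
    0 ≤ A.trace.re := by
  simpa using (Complex.le_def.mp (my_trace_nonneg h)).1

lemma my_term_nonneg (f : List (Fin m)) {σ : Matrix (Fin d) (Fin d) ℂ} (h : σ.PosSemidef) :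
    0 ≤ (M0 * Tword E M1 f σ * M0ᴴ).trace.re :=
  my_trace_re_nonneg ((my_psd_Tword E M1 f h).mul_mul_conjTranspose_same M0)

lemma my_trace_step (hE : ∀ i, ∑ j, (E i j)ᴴ * E i j = 1)
    (hM : M0ᴴ * M0 + M1ᴴ * M1 = 1) (i : Fin m) (τ : Matrix (Fin d) (Fin d) ℂ) :
    (M0 * τ * M0ᴴ).trace + (Tstep E M1 i τ).trace = τ.trace := by
  have key : ∑ j, ((E i j * M1)ᴴ * (E i j * M1)) = M1ᴴ * M1 := by
    have h1 : ∀ j, (E i j * M1)ᴴ * (E i j * M1) = M1ᴴ * ((E i j)ᴴ * E i j) * M1 := by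
      intro j; rw [Matrix.conjTranspose_mul]; simp [Matrix.mul_assoc]
    simp_rw [h1]
    rw [← Finset.sum_mul, ← Finset.mul_sum, hE i, mul_one]
  have h2 : (Tstep E M1 i τ).trace = ((M1ᴴ * M1) * τ).trace := by
    rw [Tstep, Matrix.trace_sum]
    have h3 : ∀ j, ((E i j * M1) * τ * (E i j * M1)ᴴ).trace
        = (((E i j * M1)ᴴ * (E i j * M1)) * τ).trace := by
      intro j
      rw [Matrix.trace_mul_cycle, Matrix.mul_assoc]
    simp_rw [h3]
    rw [← Matrix.trace_sum]
    congr 1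
    rw [← Finset.sum_mul, key]
  rw [h2, Matrix.trace_mul_cycle (A := M0)]
  rw [← Matrix.trace_add, ← Matrix.add_mul, hM, Matrix.one_mul]

lemma my_telescope (hE : ∀ i, ∑ j, (E i j)ᴴ * E i j = 1)
    (hM : M0ᴴ * M0 + M1ᴴ * M1 = 1) (s : ℕ → Fin m) (σ : Matrix (Fin d) (Fin d) ℂ) (N : ℕ) :
    ∑ n ∈ Finset.range N, (M0 * Tword E M1 (prefixn s n) σ * M0ᴴ).trace
      = σ.trace - (Tword E M1 (prefixn s N) σ).trace := by
  induction N with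
  | zero => simp [prefixn, Tword]
  | succ N ih =>
      rw [Finset.sum_range_succ, ih, my_Tword_prefixn_succ]
      have h := my_trace_step E M0 M1 hE hM (s N) (Tword E M1 (prefixn s N) σ)
      linear_combination h

lemma my_partial_le (hE : ∀ i, ∑ j, (E i j)ᴴ * E i j = 1)
    (hM : M0ᴴ * M0 + M1ᴴ * M1 = 1) (s : ℕ → Fin m) {σ : Matrix (Fin d) (Fin d) ℂ}
    (hσ : σ.PosSemidef) (N : ℕ) :
    ∑ n ∈ Finset.range N, (M0 * Tword E M1 (prefixn s n) σ * M0ᴴ).trace.re ≤ σ.trace.re := by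
  have h1 := congrArg Complex.re (my_telescope E M0 M1 hE hM s σ N)
  rw [Complex.re_sum] at h1
  rw [Complex.sub_re] at h1
  have h2 := my_trace_re_nonneg (my_psd_Tword E M1 (prefixn s N) hσ)
  linarith [h2]

lemma my_summable (hE : ∀ i, ∑ j, (E i j)ᴴ * E i j = 1)
    (hM : M0ᴴ * M0 + M1ᴴ * M1 = 1) (s : ℕ → Fin m) {σ : Matrix (Fin d) (Fin d) ℂ}
    (hσ : σ.PosSemidef) :
    Summable (fun n => (M0 * Tword E M1 (prefixn s n) σ * M0ᴴ).trace.re) :=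
  summable_of_sum_range_le (fun n => my_term_nonneg E M0 M1 _ hσ)
    (my_partial_le E M0 M1 hE hM s hσ)

lemma my_prefixn_take (s : ℕ → Fin m) {n N : ℕ} (h : n ≤ N) :
    (prefixn s N).take n = prefixn s n := by
  apply List.ext_getElem
  · simp [prefixn, Nat.min_eq_left h]
  · intro i h1 h2; simp [prefixn, List.getElem_take]

lemma my_tWord_prefixn (s : ℕ → Fin m) (σ : Matrix (Fin d) (Fin d) ℂ) (N : ℕ) :
    tWord E M0 M1 (prefixn s N) σ
      = ∑ n ∈ Finset.range (N+1), (M0 * Tword E M1 (prefixn s n) σ * M0ᴴ).trace.re := by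
  rw [tWord]
  have hl : (prefixn s N).length = N := by simp [prefixn]
  rw [hl]
  refine Finset.sum_congr rfl fun n hn => ?_
  rw [my_prefixn_take s (Nat.lt_succ_iff.mp (Finset.mem_range.mp hn))]

lemma my_tWord_le_tSched (hE : ∀ i, ∑ j, (E i j)ᴴ * E i j = 1)
    (hM : M0ᴴ * M0 + M1ᴴ * M1 = 1) (s : ℕ → Fin m) {σ : Matrix (Fin d) (Fin d) ℂ}
    (hσ : σ.PosSemidef) (N : ℕ) :
    tWord E M0 M1 (prefixn s N) σ ≤ tSched E M0 M1 s σ := by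
  rw [my_tWord_prefixn, tSched]
  exact Summable.sum_le_tsum _ (fun i _ => my_term_nonneg E M0 M1 _ hσ)
    (my_summable E M0 M1 hE hM s hσ)

lemma my_tWord_mono (s : ℕ → Fin m) {σ : Matrix (Fin d) (Fin d) ℂ}
    (hσ : σ.PosSemidef) {n N : ℕ} (h : n ≤ N) :
    tWord E M0 M1 (prefixn s n) σ ≤ tWord E M0 M1 (prefixn s N) σ := by
  rw [my_tWord_prefixn, my_tWord_prefixn]
  exact Finset.sum_le_sum_of_subset_of_nonneg (Finset.range_subset_range.mpr (by omega))
    (fun i _ _ => my_term_nonneg E M0 M1 _ hσ)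

lemma my_term_le_tWord (s : ℕ → Fin m) {σ : Matrix (Fin d) (Fin d) ℂ}
    (hσ : σ.PosSemidef) {k N : ℕ} (h : k ≤ N) :
    (M0 * Tword E M1 (prefixn s k) σ * M0ᴴ).trace.re ≤ tWord E M0 M1 (prefixn s N) σ := by
  rw [my_tWord_prefixn]
  exact Finset.single_le_sum (fun i _ => my_term_nonneg E M0 M1 _ hσ)
    (Finset.mem_range.mpr (by omega))

lemma my_tSched_nonneg (s : ℕ → Fin m) {σ : Matrix (Fin d) (Fin d) ℂ} (hσ : σ.PosSemidef) :
    0 ≤ tSched E M0 M1 s σ :=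
  tsum_nonneg (fun n => my_term_nonneg E M0 M1 _ hσ)

lemma my_continuous_Tstep (i : Fin m) : Continuous (Tstep E M1 i) := by
  unfold Tstep
  exact continuous_finset_sum _ fun j _ =>
    (continuous_const.matrix_mul continuous_id).matrix_mul continuous_const

lemma my_continuous_Tword (f : List (Fin m)) : Continuous (fun σ => Tword E M1 f σ) := by
  induction f with
  | nil => exact continuous_id
  | cons a t ih =>
      show Continuous fun σ => Tword E M1 t (Tstep E M1 a σ)
      exact ih.comp (my_continuous_Tstep E M1 a)

lemma my_continuous_tWord (f : List (Fin m)) : Continuous (fun σ => tWord E M0 M1 f σ) := by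
  unfold tWord
  exact continuous_finset_sum _ fun n _ =>
    Complex.continuous_re.comp
      (((continuous_const.matrix_mul (my_continuous_Tword E M1 _)).matrix_mul
        continuous_const).matrix_trace)

lemma my_entry_bound {σ : Matrix (Fin d) (Fin d) ℂ} (hσ : σ.PosSemidef)
    (htr : σ.trace = 1) (i j : Fin d) : ‖σ i j‖ ≤ 1 := by
  obtain ⟨A, rfl⟩ : ∃ A : Matrix (Fin d) (Fin d) ℂ, σ = Aᴴ * A := by
    open scoped MatrixOrder Matrix.Norms.L2Operator in
    exact CStarAlgebra.nonneg_iff_eq_star_mul_self.mp hσ.nonneg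
  set D : Fin d → ℝ := fun i => ∑ k, ‖A k i‖^2 with hD
  have hdiag : ∀ i, ((Aᴴ * A) i i).re = D i := by
    intro i
    simp only [Matrix.mul_apply, Matrix.conjTranspose_apply, hD, Complex.re_sum]
    refine Finset.sum_congr rfl fun k _ => ?_
    rw [Complex.star_def, ← Complex.normSq_eq_conj_mul_self]
    simp [Complex.sq_norm]
  have hsum : ∑ i, D i = 1 := by
    have h := congrArg Complex.re htr
    rw [Matrix.trace] at h
    rw [Complex.re_sum] at h
    simp only [Matrix.diag_apply] at h
    simp only [hdiag] at h
    simpa using h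
  have hDnn : ∀ i, 0 ≤ D i := fun i => Finset.sum_nonneg fun k _ => sq_nonneg _
  have hDle : ∀ i, D i ≤ 1 := by
    intro i
    rw [← hsum]
    exact Finset.single_le_sum (fun k _ => hDnn k) (Finset.mem_univ i)
  have h1 : ‖(Aᴴ * A) i j‖ ≤ (D i + D j)/2 := by
    rw [Matrix.mul_apply]
    calc ‖∑ k, Aᴴ i k * A k j‖ ≤ ∑ k, ‖Aᴴ i k * A k j‖ := norm_sum_le _ _
      _ = ∑ k, ‖A k i‖ * ‖A k j‖ := by
          simp [Matrix.conjTranspose_apply]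
      _ ≤ ∑ k : Fin d, (‖A k i‖^2 + ‖A k j‖^2)/2 := by
          refine Finset.sum_le_sum fun k _ => ?_
          nlinarith [sq_nonneg (‖A k i‖ - ‖A k j‖)]
      _ = (D i + D j)/2 := by
          rw [hD]
          rw [← Finset.sum_div, Finset.sum_add_distrib]
  calc ‖(Aᴴ * A) i j‖ ≤ (D i + D j)/2 := h1
    _ ≤ 1 := by linarith [hDle i, hDle j]

end AuxLemmas

/-- if `h(ρ) = 0` then some state in the reachable space diverges with
probability one along some schedule. -/
theorem exists_diverging_state_of_hProb_zero (d m r : ℕ) (hd : 0 < d) (hm : 0 < m)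
    (E : Fin m → Fin r → Matrix (Fin d) (Fin d) ℂ)
    (hE : ∀ i, ∑ j, (E i j)ᴴ * E i j = 1)
    (M0 M1 : Matrix (Fin d) (Fin d) ℂ)
    (hM : M0ᴴ * M0 + M1ᴴ * M1 = 1)
    (ρ : Matrix (Fin d) (Fin d) ℂ) (hρ : ρ.PosSemidef) (htr : ρ.trace = 1)
    (h0 : hProb E M0 M1 ρ = 0) :
    ∃ σ : Matrix (Fin d) (Fin d) ℂ, σ.PosSemidef ∧ σ.trace = 1 ∧
      supp σ ≤ HR E M1 ρ ∧ ∃ s : ℕ → Fin m, tSched E M0 M1 s σ = 0 := by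
  classical
  haveI : Nonempty (Fin m) := ⟨⟨0, hm⟩⟩
  -- The compact set K of admissible density matrices
  have hsuppρ : supp ρ ≤ HR E M1 ρ := by
    have hs : supp ρ = supp (Tword E M1 [] ρ) := rfl
    rw [hs, HR]
    exact le_iSup (fun f => supp (Tword E M1 f ρ)) []
  set K : Set (Matrix (Fin d) (Fin d) ℂ) :=
    {σ | σ.PosSemidef ∧ σ.trace = 1 ∧ supp σ ≤ HR E M1 ρ} with hKdef
  have hKclosed : IsClosed K := by
    have h1 : IsClosed {σ : Matrix (Fin d) (Fin d) ℂ | σ.PosSemidef} := by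
      have h : {σ : Matrix (Fin d) (Fin d) ℂ | σ.PosSemidef}
          = ((fun σ : Matrix (Fin d) (Fin d) ℂ => σᴴ - σ) ⁻¹' {0})
            ∩ ⋂ x : Fin d → ℂ,
              (fun σ : Matrix (Fin d) (Fin d) ℂ => star x ⬝ᵥ σ *ᵥ x) ⁻¹' (Set.Ici (0:ℂ)) := by
        ext σ
        simp only [Set.mem_setOf_eq, Set.mem_inter_iff, Set.mem_preimage,
          Set.mem_singleton_iff, Set.mem_iInter, Set.mem_Ici, sub_eq_zero]
        exact Matrix.posSemidef_iff_dotProduct_mulVec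
      rw [h]
      refine IsClosed.inter (isClosed_singleton.preimage
        ((continuous_id.matrix_conjTranspose).sub continuous_id)) ?_
      exact isClosed_iInter fun x => isClosed_Ici.preimage
        (Continuous.dotProduct continuous_const
          (continuous_id.matrix_mulVec continuous_const))
    have h2 : IsClosed {σ : Matrix (Fin d) (Fin d) ℂ | σ.trace = 1} :=
      isClosed_singleton.preimage (continuous_id.matrix_trace)
    have h3 : IsClosed {σ : Matrix (Fin d) (Fin d) ℂ | supp σ ≤ HR E M1 ρ} := by
      have h : {σ : Matrix (Fin d) (Fin d) ℂ | supp σ ≤ HR E M1 ρ}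
          = ⋂ x : Fin d → ℂ, (fun σ : Matrix (Fin d) (Fin d) ℂ => σ *ᵥ x) ⁻¹'
              ((HR E M1 ρ : Submodule ℂ (Fin d → ℂ)) : Set (Fin d → ℂ)) := by
        ext σ
        simp only [Set.mem_setOf_eq, Set.mem_iInter, Set.mem_preimage, SetLike.mem_coe]
        constructor
        · intro h x; exact h ⟨x, Matrix.toLin'_apply σ x⟩
        · rintro h y ⟨x, rfl⟩; rw [Matrix.toLin'_apply]; exact h x
      rw [h]
      exact isClosed_iInter fun x => ((HR E M1 ρ).closed_of_finiteDimensional).preimage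
        (continuous_id.matrix_mulVec continuous_const)
    exact h1.inter (h2.inter h3)
  have hKcompact : IsCompact K := by
    have hB : IsCompact {σ : Matrix (Fin d) (Fin d) ℂ | ∀ i j, ‖σ i j‖ ≤ 1} := by
      have h : {σ : Matrix (Fin d) (Fin d) ℂ | ∀ i j, ‖σ i j‖ ≤ 1}
          = Set.univ.pi (fun _ : Fin d => Set.univ.pi
              fun _ : Fin d => Metric.closedBall (0:ℂ) 1) := by
        ext σ
        constructor
        · intro hσ i _ j _
          simpa [Metric.mem_closedBall, dist_zero_right] using hσ i j
        · intro hσ i j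
          have := hσ i (Set.mem_univ i) j (Set.mem_univ j)
          simpa [Metric.mem_closedBall, dist_zero_right] using this
      rw [h]
      exact isCompact_univ_pi fun i => isCompact_univ_pi fun j => isCompact_closedBall _ _
    exact hB.of_isClosed_subset hKclosed
      (fun σ hσ i j => my_entry_bound hσ.1 hσ.2.1 i j)
  -- The decreasing family of closed sets
  set C : ℕ → Set ((Matrix (Fin d) (Fin d) ℂ) × (ℕ → Fin m)) := fun n =>
    {p | p.1 ∈ K ∧ tWord E M0 M1 (prefixn p.2 n) p.1 ≤ 1/((n:ℝ)+1)} with hCdef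
  have hCne : ∀ n, (C n).Nonempty := by
    intro n
    have hpos : (0:ℝ) < 1/((n:ℝ)+1) := by positivity
    have h0' : sInf { x : ℝ | ∃ σ : Matrix (Fin d) (Fin d) ℂ,
        σ.PosSemidef ∧ σ.trace = 1 ∧ supp σ ≤ HR E M1 ρ ∧ x = tInf E M0 M1 σ } = 0 := h0
    have hlt : sInf { x : ℝ | ∃ σ : Matrix (Fin d) (Fin d) ℂ,
        σ.PosSemidef ∧ σ.trace = 1 ∧ supp σ ≤ HR E M1 ρ ∧ x = tInf E M0 M1 σ }
        < 1/((n:ℝ)+1) := h0' ▸ hpos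
    have hSne : { x : ℝ | ∃ σ : Matrix (Fin d) (Fin d) ℂ,
        σ.PosSemidef ∧ σ.trace = 1 ∧ supp σ ≤ HR E M1 ρ ∧ x = tInf E M0 M1 σ }.Nonempty :=
      ⟨tInf E M0 M1 ρ, ρ, hρ, htr, hsuppρ, rfl⟩
    obtain ⟨x, hxS, hxlt⟩ := exists_lt_of_csInf_lt hSne hlt
    obtain ⟨σ, hψ1, hψ2, hψ3, rfl⟩ := hxS
    rw [tInf] at hxlt
    obtain ⟨s, hs⟩ := exists_lt_of_ciInf_lt hxlt
    exact ⟨(σ, s), ⟨hψ1, hψ2, hψ3⟩,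
      le_of_lt (lt_of_le_of_lt (my_tWord_le_tSched E M0 M1 hE hM s hψ1 n) hs)⟩
  have hCanti : ∀ n, C (n+1) ⊆ C n := by
    rintro n ⟨σ, s⟩ ⟨hKmem, hle⟩
    refine ⟨hKmem, le_trans (my_tWord_mono E M0 M1 s hKmem.1 (Nat.le_succ n)) (le_trans hle ?_)⟩
    apply one_div_le_one_div_of_le
    · positivity
    · push_cast; linarith
  have hCclosed : ∀ n, IsClosed (C n) := by
    intro n
    have h : C n = (K ×ˢ (Set.univ : Set (ℕ → Fin m)))
        ∩ ⋃ v : Fin n → Fin m,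
          ({σ : Matrix (Fin d) (Fin d) ℂ | tWord E M0 M1 (List.ofFn v) σ ≤ 1/((n:ℝ)+1)} ×ˢ
            (⋂ i : Fin n, {s : ℕ → Fin m | s i = v i})) := by
      ext ⟨σ, s⟩
      simp only [hCdef, Set.mem_setOf_eq, Set.mem_inter_iff, Set.mem_prod, Set.mem_univ,
        and_true, Set.mem_iUnion, Set.mem_iInter]
      constructor
      · rintro ⟨h1, h2⟩
        exact ⟨h1, ⟨fun i => s i, h2, fun i => rfl⟩⟩
      · rintro ⟨h1, v, hv1, hv2⟩
        refine ⟨h1, ?_⟩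
        have hpv : prefixn s n = List.ofFn v :=
          congrArg List.ofFn (funext fun i => hv2 i)
        rw [hpv]; exact hv1
    rw [h]
    refine IsClosed.inter (hKclosed.prod isClosed_univ)
      (isClosed_iUnion_of_finite fun v => IsClosed.prod ?_ ?_)
    · exact isClosed_le (my_continuous_tWord E M0 M1 _) continuous_const
    · exact isClosed_iInter fun i => isClosed_eq (continuous_apply _) continuous_const
  have hC0compact : IsCompact (C 0) :=
    (hKcompact.prod isCompact_univ).of_isClosed_subset (hCclosed 0)
      (fun p hp => Set.mem_prod.mpr ⟨hp.1, Set.mem_univ _⟩)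
  obtain ⟨p, hp⟩ := IsCompact.nonempty_iInter_of_sequence_nonempty_isCompact_isClosed
    C hCanti hCne hC0compact hCclosed
  have hpn : ∀ n, p ∈ C n := by
    intro n
    exact Set.mem_iInter.mp hp n
  have hpK : p.1 ∈ K := (hpn 0).1
  refine ⟨p.1, hpK.1, hpK.2.1, hpK.2.2, p.2, ?_⟩
  have hterm0 : ∀ k, (M0 * Tword E M1 (prefixn p.2 k) p.1 * M0ᴴ).trace.re = 0 := by
    intro k
    have hnn := my_term_nonneg E M0 M1 (prefixn p.2 k) hpK.1
    have hle : ∀ N, k ≤ N →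
        (M0 * Tword E M1 (prefixn p.2 k) p.1 * M0ᴴ).trace.re ≤ 1/((N:ℝ)+1) :=
      fun N hN => le_trans (my_term_le_tWord E M0 M1 p.2 hpK.1 hN) (hpn N).2
    by_contra hne
    have hposk : 0 < (M0 * Tword E M1 (prefixn p.2 k) p.1 * M0ᴴ).trace.re :=
      lt_of_le_of_ne hnn (Ne.symm hne)
    obtain ⟨N0, hN0⟩ := exists_nat_one_div_lt hposk
    have h1 := hle (max N0 k) (le_max_right _ _)
    have h2 : 1/(((max N0 k : ℕ):ℝ) + 1) ≤ 1/((N0:ℝ)+1) := by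
      apply one_div_le_one_div_of_le
      · positivity
      · have hmax : (N0:ℝ) ≤ ((max N0 k : ℕ):ℝ) := by exact_mod_cast le_max_left N0 k
        linarith
    linarith
  calc tSched E M0 M1 p.2 p.1 = ∑' _ : ℕ, (0:ℝ) := by
        rw [tSched]; exact tsum_congr hterm0
    _ = 0 := tsum_zero
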